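/- arXiv:1904.00519 — 2 statements merged into one kernel-verified Lean document; each statement's English description precedes it below -/
import Mathlib

section
/- Let M : [0,1) → [0,∞) be increasing and continuous with M(0) = 0, let p > 0 and α ≥ 0, and define N(r) = sup_{0 ≤ t ≤ r} M(t)(1−t)^{α/p}. Then, for any integer n ≥ 2, ∫₀¹ (1−r)^{n−2+α} M(r)^p dr < ∞ if and only if ∫₀¹ (1−r)^{n−2} N(r)^p dr < ∞. -/
open MeasureTheory Metric Set
open scoped ENNReal NNReal

noncomputable section

abbrev Eucl (n : ℕ) := EuclideanSpace ℝ (Fin n)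

/-- `f : 𝔹ⁿ → ℝⁿ` is `K`-quasiconformal with a.e. derivative `Df`:
`f` is a homeomorphism of the open unit ball onto its image, differentiable a.e. on the ball
with derivative `Df`, `‖Df‖ⁿ` is locally integrable on the ball, and
`‖Df(x)‖ⁿ ≤ K · J_f(x)` for a.e. `x` in the ball. -/
structure IsQuasiconformal {n : ℕ} (K : ℝ) (f : Eucl n → Eucl n)
    (Df : Eucl n → Eucl n →L[ℝ] Eucl n) : Prop where
  one_le_K : 1 ≤ K
  embedding : Topology.IsEmbedding fun x : (Metric.ball (0 : Eucl n) 1) => f x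
  hasFDerivAt : ∀ᵐ x ∂(volume.restrict (Metric.ball (0 : Eucl n) 1)), HasFDerivAt f (Df x) x
  locInt : LocallyIntegrableOn (fun x => ‖Df x‖ ^ n) (Metric.ball (0 : Eucl n) 1)
  distortion : ∀ᵐ x ∂(volume.restrict (Metric.ball (0 : Eucl n) 1)),
    ‖Df x‖ ^ n ≤ K * (Df x).det

/-- `M(r, f) = sup_{ω ∈ S^{n-1}} |f(rω)|`. -/
def maxMod {n : ℕ} (f : Eucl n → Eucl n) (r : ℝ) : ℝ :=
  ⨆ ω ∈ Metric.sphere (0 : Eucl n) 1, ‖f (r • ω)‖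

/-- The cone `Γ(ω) = ⋃_{0<r<1} B(rω, (1-r)/2)`. -/
def cone {n : ℕ} (ω : Eucl n) : Set (Eucl n) :=
  ⋃ r ∈ Set.Ioo (0 : ℝ) 1, Metric.ball (r • ω) ((1 - r) / 2)

/-- The averaged derivative
`a_f(x) = exp( (1/(n |B_x|)) ∫_{B_x} log J_f(y) dy )`, where `B_x = B(x, (1-|x|)/2)`. -/
def avgDeriv {n : ℕ} (Df : Eucl n → Eucl n →L[ℝ] Eucl n) (x : Eucl n) : ℝ :=
  Real.exp ((∫ y in Metric.ball x ((1 - ‖x‖) / 2), Real.log ((Df y).det)) /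
    (n * (volume (Metric.ball x ((1 - ‖x‖) / 2))).toReal))

lemma aux_sup {M : ℝ → ℝ} {p α : ℝ} (hp : 0 < p) (hα : 0 ≤ α)
    (hMnonneg : ∀ t ∈ Set.Ico (0 : ℝ) 1, 0 ≤ M t)
    (hMcont : ContinuousOn M (Set.Ico (0 : ℝ) 1))
    {r : ℝ} (hr : r ∈ Set.Ico (0:ℝ) 1) :
    ∃ t' ∈ Set.Icc (0:ℝ) r,
      (⨆ t ∈ Set.Icc (0 : ℝ) r, M t * (1 - t) ^ (α / p)) = M t' * (1 - t') ^ (α / p) ∧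
      (∀ t ∈ Set.Icc (0:ℝ) r, M t * (1 - t) ^ (α / p) ≤ M t' * (1 - t') ^ (α / p)) ∧
      0 ≤ M t' * (1 - t') ^ (α / p) := by
  set f : ℝ → ℝ := fun t => M t * (1 - t) ^ (α / p) with hf
  have hsub : Set.Icc (0:ℝ) r ⊆ Set.Ico (0:ℝ) 1 := fun t ht => ⟨ht.1, lt_of_le_of_lt ht.2 hr.2⟩
  have hcont : ContinuousOn f (Set.Icc (0:ℝ) r) := by
    apply (hMcont.mono hsub).mul
    exact (continuousOn_const.sub continuousOn_id).rpow_const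
      (fun x hx => Or.inr (by positivity))
  obtain ⟨t', ht', hmax⟩ := isCompact_Icc.exists_isMaxOn ⟨0, by simp [hr.1]⟩ hcont
  have hnn : 0 ≤ f t' := mul_nonneg (hMnonneg t' (hsub ht'))
    (Real.rpow_nonneg (by linarith [(hsub ht').2]) _)
  have hle : ∀ t, (⨆ _ : t ∈ Set.Icc (0:ℝ) r, f t) ≤ f t' := by
    intro t
    by_cases h : t ∈ Set.Icc (0:ℝ) r
    · rw [ciSup_pos h]; exact hmax h
    · simp only [h]; rw [Real.iSup_of_isEmpty]; exact hnn
  refine ⟨t', ht', ?_, fun t ht => hmax ht, hnn⟩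
  refine le_antisymm (ciSup_le hle) ?_
  have : f t' = ⨆ _ : t' ∈ Set.Icc (0:ℝ) r, f t' := (ciSup_pos (f := fun _ => f t') ht').symm
  show f t' ≤ ⨆ t ∈ Set.Icc (0:ℝ) r, f t
  rw [this]
  exact le_ciSup ⟨f t', forall_mem_range.2 hle⟩ t'

lemma aux_alg {x m p α : ℝ} (hx : 0 < x) (hm : 0 ≤ m) (hp : 0 < p) (q : ℝ) :
    x ^ (q + α) * m ^ p = x ^ q * (m * x ^ (α / p)) ^ p := by
  rw [Real.mul_rpow hm (Real.rpow_nonneg hx.le _), ← Real.rpow_mul hx.le,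
    div_mul_cancel₀ α hp.ne', Real.rpow_add hx]
  ring

theorem stmt8 {n : ℕ} (hn : 2 ≤ n) (M : ℝ → ℝ) (p α : ℝ) (hp : 0 < p) (hα : 0 ≤ α)
    (hM0 : M 0 = 0) (hMnonneg : ∀ t ∈ Set.Ico (0 : ℝ) 1, 0 ≤ M t)
    (hMmono : MonotoneOn M (Set.Ico (0 : ℝ) 1))
    (hMcont : ContinuousOn M (Set.Ico (0 : ℝ) 1)) :
    (∫⁻ r in Set.Ioo (0 : ℝ) 1,
        ENNReal.ofReal ((1 - r) ^ ((n : ℝ) - 2 + α) * M r ^ p) < ⊤) ↔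
    (∫⁻ r in Set.Ioo (0 : ℝ) 1,
        ENNReal.ofReal ((1 - r) ^ ((n : ℝ) - 2) *
          (⨆ t ∈ Set.Icc (0 : ℝ) r, M t * (1 - t) ^ (α / p)) ^ p) < ⊤) := by
  have hn2 : (0:ℝ) ≤ (n:ℝ) - 2 := by
    have : (2:ℝ) ≤ (n:ℝ) := by exact_mod_cast hn
    linarith
  constructor
  · -- hard direction
    intro hJ
    set g : ℝ → ℝ≥0∞ := fun s => ENNReal.ofReal ((1-s) ^ (α-1) * M s ^ p) with hg
    have hgae : AEMeasurable g (volume.restrict (Set.Ioo (0:ℝ) 1)) := by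
      refine ContinuousOn.aemeasurable ?_ measurableSet_Ioo
      refine ENNReal.continuous_ofReal.comp_continuousOn ?_
      refine ContinuousOn.mul ?_ ?_
      · refine (continuousOn_const.sub continuousOn_id).rpow_const (fun x hx => Or.inl ?_)
        simp only [Set.mem_Ioo] at hx
        simp only [Pi.sub_apply, id_eq]
        intro h
        linarith [hx.2]
      · exact (hMcont.mono (Set.Ioo_subset_Ico_self)).rpow_const (fun x hx => Or.inr hp.le)
    set gm : ℝ → ℝ≥0∞ := hgae.mk g with hgmdef
    have hgm : Measurable gm := hgae.measurable_mk
    have hgeq : g =ᵐ[volume.restrict (Set.Ioo (0:ℝ) 1)] gm := hgae.ae_eq_mk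
    set c : ℝ := (2:ℝ) ^ (α + 1) with hc
    have hcpos : 0 < c := Real.rpow_pos_of_pos (by norm_num) _
    set Φ : ℝ → ℝ≥0∞ := fun r => ∫⁻ s in Set.Ioo (0:ℝ) 1,
      (Set.Iio ((1+r)/2)).indicator gm s with hΦ
    -- key pointwise bound
    have keybound : ∀ r ∈ Set.Ioo (0:ℝ) 1,
        ENNReal.ofReal ((1 - r) ^ ((n : ℝ) - 2) *
          (⨆ t ∈ Set.Icc (0 : ℝ) r, M t * (1 - t) ^ (α / p)) ^ p)
        ≤ ENNReal.ofReal (c * (1 - r) ^ ((n : ℝ) - 2)) * Φ r := by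
      intro r hr
      obtain ⟨t', ht', hNeq, hmax, hnn⟩ := aux_sup hp hα hMnonneg hMcont ⟨hr.1.le, hr.2⟩
      have ht'1 : t' < 1 := lt_of_le_of_lt ht'.2 hr.2
      have h1t' : 0 < 1 - t' := by linarith
      have hMt' : 0 ≤ M t' := hMnonneg t' ⟨ht'.1, ht'1⟩
      rw [hNeq]
      -- lower bound for Φ r
      have hΦlow : ENNReal.ofReal ((M t' * (1-t')^(α/p))^p / c) ≤ Φ r := by
        have hss : Set.Iio ((1+r)/2) ∩ Set.Ioo (0:ℝ) 1 = Set.Ioo (0:ℝ) ((1+r)/2) := by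
          ext s
          simp only [Set.mem_inter_iff, Set.mem_Iio, Set.mem_Ioo]
          constructor
          · rintro ⟨h1, h2, h3⟩; exact ⟨h2, h1⟩
          · rintro ⟨h1, h2⟩; exact ⟨h2, h1, by linarith [hr.2]⟩
        have e1 : Φ r = ∫⁻ s in Set.Ioo (0:ℝ) ((1+r)/2), gm s := by
          show (∫⁻ s in Set.Ioo (0:ℝ) 1, (Set.Iio ((1+r)/2)).indicator gm s) = _
          rw [lintegral_indicator measurableSet_Iio, Measure.restrict_restrict measurableSet_Iio, hss]
        rw [e1]
        have hsub2 : Set.Ioo t' ((1+t')/2) ⊆ Set.Ioo (0:ℝ) ((1+r)/2) := by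
          intro s hs
          exact ⟨lt_of_le_of_lt ht'.1 hs.1, lt_of_lt_of_le hs.2 (by linarith [ht'.2])⟩
        refine le_trans ?_ (lintegral_mono_set hsub2)
        have e2 : ∫⁻ s in Set.Ioo t' ((1+t')/2), gm s = ∫⁻ s in Set.Ioo t' ((1+t')/2), g s := by
          refine lintegral_congr_ae ?_
          refine ae_restrict_of_ae_restrict_of_subset ?_ hgeq.symm
          intro s hs
          exact ⟨lt_of_le_of_lt ht'.1 hs.1, by rw [Set.mem_Ioo] at hs; linarith [hs.2, ht'1]⟩
        rw [e2]
        have e3 : ENNReal.ofReal (2^(-α) * ((1-t')^(α-1) * M t' ^ p)) * volume (Set.Ioo t' ((1+t')/2))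
            ≤ ∫⁻ s in Set.Ioo t' ((1+t')/2), g s := by
          rw [← setLIntegral_const]
          refine lintegral_mono_ae ((ae_restrict_iff' measurableSet_Ioo).mpr (ae_of_all _ ?_))
          intro s hs
          rw [Set.mem_Ioo] at hs
          have hs1 : 0 < 1 - s := by linarith [hs.2]
          have hst : (1-t')/2 ≤ 1 - s := by linarith [hs.2]
          have hst2 : 1 - s ≤ 1 - t' := by linarith [hs.1]
          refine ENNReal.ofReal_le_ofReal ?_
          have hMle : M t' ^ p ≤ M s ^ p := by
            refine Real.rpow_le_rpow hMt' ?_ hp.le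
            exact hMmono ⟨ht'.1, ht'1⟩ ⟨le_trans ht'.1 hs.1.le, by linarith [hs.2, ht'1]⟩ hs.1.le
          have key : 2^(-α) * (1-t')^(α-1) ≤ (1-s)^(α-1) := by
            have d1 : (1-s)^(α-1) = (1-s)^α * (1-s)⁻¹ := by
              rw [← Real.rpow_neg_one (1-s), ← Real.rpow_add hs1]; ring_nf
            have d2 : (1-t')^(α-1) = (1-t')^α * (1-t')⁻¹ := by
              rw [← Real.rpow_neg_one (1-t'), ← Real.rpow_add h1t']; ring_nf
            have d3 : (2:ℝ)^(-α) * (1-t')^α = ((1-t')/2)^α := by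
              rw [Real.div_rpow h1t'.le (by norm_num : (0:ℝ) ≤ 2), Real.rpow_neg (by norm_num : (0:ℝ) ≤ 2)]
              ring
            rw [d1, d2, ← mul_assoc, d3]
            have b1 : ((1-t')/2)^α ≤ (1-s)^α := Real.rpow_le_rpow (by linarith) hst hα
            have b2 : (1-t')⁻¹ ≤ (1-s)⁻¹ := by
              apply inv_anti₀ hs1 hst2
            exact mul_le_mul b1 b2 (by positivity) (by positivity)
          calc 2^(-α) * ((1-t')^(α-1) * M t' ^ p) = (2^(-α) * (1-t')^(α-1)) * M t' ^ p := by ring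
            _ ≤ (1-s)^(α-1) * M s ^ p := by
                refine mul_le_mul key hMle (by positivity) ?_
                positivity
        refine le_trans ?_ e3
        rw [Real.volume_Ioo]
        have harea : (1+t')/2 - t' = (1-t')/2 := by ring
        rw [harea, ← ENNReal.ofReal_mul (by positivity)]
        refine ENNReal.ofReal_le_ofReal (le_of_eq ?_)
        have hfp : (M t' * (1-t')^(α/p))^p = M t' ^ p * (1-t')^α := by
          rw [Real.mul_rpow hMt' (Real.rpow_nonneg h1t'.le _), ← Real.rpow_mul h1t'.le,
            div_mul_cancel₀ α hp.ne']
        have hα1 : (1-t')^(α-1) * (1-t') = (1-t')^α := by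
          rw [← Real.rpow_add_one h1t'.ne' (α-1)]; ring_nf
        have hc2 : c = 2^α * 2 := by rw [hc, Real.rpow_add (by norm_num : (0:ℝ) < 2), Real.rpow_one]
        have h2α : (0:ℝ) < 2^α := Real.rpow_pos_of_pos (by norm_num) α
        have key2 : (2:ℝ)^(-α) * ((1-t')^(α-1) * M t' ^ p) * ((1-t')/2)
            = M t' ^ p * (1-t')^α / c := by
          rw [hc2, Real.rpow_neg (by norm_num : (0:ℝ) ≤ 2), ← hα1]
          field_simp
        rw [hfp, key2]
      -- combine
      rw [ENNReal.ofReal_mul (Real.rpow_nonneg (by linarith [hr.2] : (0:ℝ) ≤ 1-r) _),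
        ENNReal.ofReal_mul (by positivity : (0:ℝ) ≤ c)]
      calc ENNReal.ofReal ((1-r)^((n:ℝ)-2)) * ENNReal.ofReal ((M t' * (1-t')^(α/p))^p)
          = ENNReal.ofReal ((1-r)^((n:ℝ)-2)) * (ENNReal.ofReal c * ENNReal.ofReal ((M t' * (1-t')^(α/p))^p / c)) := by
            rw [← ENNReal.ofReal_mul hcpos.le, mul_div_cancel₀ _ hcpos.ne']
        _ ≤ ENNReal.ofReal ((1-r)^((n:ℝ)-2)) * (ENNReal.ofReal c * Φ r) := by
            exact mul_le_mul_right (mul_le_mul_right hΦlow _) _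
        _ = ENNReal.ofReal c * ENNReal.ofReal ((1-r)^((n:ℝ)-2)) * Φ r := by ring
    -- the product function
    set F : ℝ × ℝ → ℝ≥0∞ := fun z =>
      ENNReal.ofReal (c * (1 - z.1) ^ ((n:ℝ)-2)) *
        ({z : ℝ × ℝ | z.2 < (1 + z.1)/2}.indicator (fun z => gm z.2) z) with hF
    have hSmeas : MeasurableSet {z : ℝ × ℝ | z.2 < (1 + z.1)/2} := by
      have hset : {z : ℝ × ℝ | z.2 < (1 + z.1)/2} = {z : ℝ × ℝ | z.2 - (1 + z.1)/2 < 0} := by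
        ext z; simp [sub_neg]
      rw [hset]
      exact measurableSet_lt
        (measurable_snd.sub ((measurable_const.add measurable_fst).div_const 2)) measurable_const
    have hFmeas : Measurable F := by
      apply Measurable.mul
      · have h1 : Measurable (fun z : ℝ × ℝ => (1:ℝ) - z.1) :=
          measurable_const.sub measurable_fst
        exact ENNReal.measurable_ofReal.comp ((h1.pow measurable_const).const_mul c)
      · exact (hgm.comp measurable_snd).indicator hSmeas
    have step1 : (∫⁻ r in Set.Ioo (0:ℝ) 1,
          ENNReal.ofReal ((1 - r) ^ ((n : ℝ) - 2) *
            (⨆ t ∈ Set.Icc (0 : ℝ) r, M t * (1 - t) ^ (α / p)) ^ p))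
        ≤ ∫⁻ r in Set.Ioo (0:ℝ) 1, ENNReal.ofReal (c * (1-r)^((n:ℝ)-2)) * Φ r :=
      lintegral_mono_ae ((ae_restrict_iff' measurableSet_Ioo).mpr (ae_of_all _ keybound))
    have step2 : (∫⁻ r in Set.Ioo (0:ℝ) 1, ENNReal.ofReal (c * (1-r)^((n:ℝ)-2)) * Φ r)
        = ∫⁻ r in Set.Ioo (0:ℝ) 1, ∫⁻ s in Set.Ioo (0:ℝ) 1, F (r, s) := by
      refine lintegral_congr fun r => ?_
      show ENNReal.ofReal (c * (1-r)^((n:ℝ)-2)) *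
          (∫⁻ s in Set.Ioo (0:ℝ) 1, (Set.Iio ((1+r)/2)).indicator gm s) = _
      rw [← lintegral_const_mul _ (hgm.indicator measurableSet_Iio)]
      refine lintegral_congr fun s => ?_
      simp only [hF, Set.indicator_apply, Set.mem_Iio, Set.mem_setOf_eq]
    have step3 : (∫⁻ r in Set.Ioo (0:ℝ) 1, ∫⁻ s in Set.Ioo (0:ℝ) 1, F (r, s))
        = ∫⁻ s in Set.Ioo (0:ℝ) 1, ∫⁻ r in Set.Ioo (0:ℝ) 1, F (r, s) :=
      lintegral_lintegral_swap hFmeas.aemeasurable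
    have step4 : ∀ s ∈ Set.Ioo (0:ℝ) 1, (∫⁻ r in Set.Ioo (0:ℝ) 1, F (r, s))
        ≤ ENNReal.ofReal (c * 2^((n:ℝ)-1) * (1-s)^((n:ℝ)-1)) * gm s := by
      intro s hs
      have h1s : 0 < 1 - s := by linarith [hs.2]
      have hset : {r : ℝ | s < (1 + r)/2} = Set.Ioi (2*s - 1) := by
        ext r; simp only [Set.mem_setOf_eq, Set.mem_Ioi]
        constructor <;> intro h <;> linarith
      have e4 : ∀ r : ℝ, F (r, s) = ({r : ℝ | s < (1 + r)/2}).indicator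
          (fun r => ENNReal.ofReal (c * (1-r)^((n:ℝ)-2)) * gm s) r := by
        intro r
        by_cases h : s < (1 + r)/2
        · simp [hF, Set.indicator_apply, h, Set.mem_setOf_eq]
        · simp [hF, Set.indicator_apply, h, Set.mem_setOf_eq]
      calc (∫⁻ r in Set.Ioo (0:ℝ) 1, F (r, s))
          = ∫⁻ r in Set.Ioi (2*s-1) ∩ Set.Ioo (0:ℝ) 1,
              ENNReal.ofReal (c * (1-r)^((n:ℝ)-2)) * gm s := by
            rw [lintegral_congr e4, hset, lintegral_indicator measurableSet_Ioi,
              Measure.restrict_restrict measurableSet_Ioi]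
        _ ≤ ∫⁻ _r in Set.Ioi (2*s-1) ∩ Set.Ioo (0:ℝ) 1,
              ENNReal.ofReal (c * (2*(1-s))^((n:ℝ)-2)) * gm s := by
            refine lintegral_mono_ae ((ae_restrict_iff'
              (measurableSet_Ioi.inter measurableSet_Ioo)).mpr (ae_of_all _ ?_))
            intro r hr
            refine mul_le_mul_left (ENNReal.ofReal_le_ofReal ?_) _
            refine mul_le_mul_of_nonneg_left ?_ hcpos.le
            refine Real.rpow_le_rpow (by linarith [hr.2.2]) (by linarith [Set.mem_Ioi.mp hr.1]) hn2
        _ = ENNReal.ofReal (c * (2*(1-s))^((n:ℝ)-2)) * gm s *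
              volume (Set.Ioi (2*s-1) ∩ Set.Ioo (0:ℝ) 1) := setLIntegral_const _ _
        _ ≤ ENNReal.ofReal (c * (2*(1-s))^((n:ℝ)-2)) * gm s * ENNReal.ofReal (2*(1-s)) := by
            refine mul_le_mul_right ?_ _
            refine le_trans (measure_mono (?_ : _ ⊆ Set.Ioo (max (2*s-1) 0) 1)) ?_
            · intro r hr
              exact ⟨max_lt (Set.mem_Ioi.mp hr.1) hr.2.1, hr.2.2⟩
            · rw [Real.volume_Ioo]
              exact ENNReal.ofReal_le_ofReal (by linarith [le_max_left (2*s-1) (0:ℝ)])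
        _ = ENNReal.ofReal (c * 2^((n:ℝ)-1) * (1-s)^((n:ℝ)-1)) * gm s := by
            rw [mul_right_comm, ← ENNReal.ofReal_mul
              (mul_nonneg hcpos.le (Real.rpow_nonneg (by linarith) _))]
            congr 2
            rw [Real.mul_rpow (by norm_num : (0:ℝ) ≤ 2) h1s.le]
            have hnn1 : ((n:ℝ)-1) = ((n:ℝ)-2) + 1 := by ring
            rw [hnn1, Real.rpow_add_one (by norm_num : (2:ℝ) ≠ 0), Real.rpow_add_one h1s.ne']
            ring
    have step5 : (∫⁻ s in Set.Ioo (0:ℝ) 1,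
          ENNReal.ofReal (c * 2^((n:ℝ)-1) * (1-s)^((n:ℝ)-1)) * gm s)
        = ∫⁻ s in Set.Ioo (0:ℝ) 1, ENNReal.ofReal (c * 2^((n:ℝ)-1)) *
            ENNReal.ofReal ((1-s)^((n:ℝ)-2+α) * M s ^ p) := by
      refine lintegral_congr_ae ?_
      filter_upwards [hgeq, ae_restrict_mem measurableSet_Ioo] with s h1 h2
      rw [← h1]
      have h1s : 0 < 1 - s := by linarith [h2.2]
      show ENNReal.ofReal (c * 2^((n:ℝ)-1) * (1-s)^((n:ℝ)-1)) *
          ENNReal.ofReal ((1-s)^(α-1) * M s ^ p) = _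
      rw [← ENNReal.ofReal_mul (mul_nonneg (mul_nonneg hcpos.le
          (Real.rpow_nonneg (by norm_num) _)) (Real.rpow_nonneg h1s.le _)),
        ← ENNReal.ofReal_mul (mul_nonneg hcpos.le (Real.rpow_nonneg (by norm_num) _))]
      congr 1
      have hexp : (1-s)^((n:ℝ)-2+α) = (1-s)^((n:ℝ)-1) * (1-s)^(α-1) := by
        rw [← Real.rpow_add h1s]; ring_nf
      rw [hexp]; ring
    calc (∫⁻ r in Set.Ioo (0:ℝ) 1,
          ENNReal.ofReal ((1 - r) ^ ((n : ℝ) - 2) *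
            (⨆ t ∈ Set.Icc (0 : ℝ) r, M t * (1 - t) ^ (α / p)) ^ p))
        ≤ ∫⁻ r in Set.Ioo (0:ℝ) 1, ENNReal.ofReal (c * (1-r)^((n:ℝ)-2)) * Φ r := step1
      _ = ∫⁻ r in Set.Ioo (0:ℝ) 1, ∫⁻ s in Set.Ioo (0:ℝ) 1, F (r, s) := step2
      _ = ∫⁻ s in Set.Ioo (0:ℝ) 1, ∫⁻ r in Set.Ioo (0:ℝ) 1, F (r, s) := step3
      _ ≤ ∫⁻ s in Set.Ioo (0:ℝ) 1,
            ENNReal.ofReal (c * 2^((n:ℝ)-1) * (1-s)^((n:ℝ)-1)) * gm s :=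
          lintegral_mono_ae ((ae_restrict_iff' measurableSet_Ioo).mpr (ae_of_all _ step4))
      _ = ∫⁻ s in Set.Ioo (0:ℝ) 1, ENNReal.ofReal (c * 2^((n:ℝ)-1)) *
            ENNReal.ofReal ((1-s)^((n:ℝ)-2+α) * M s ^ p) := step5
      _ = ENNReal.ofReal (c * 2^((n:ℝ)-1)) *
            ∫⁻ s in Set.Ioo (0:ℝ) 1, ENNReal.ofReal ((1-s)^((n:ℝ)-2+α) * M s ^ p) :=
          lintegral_const_mul' _ _ ENNReal.ofReal_ne_top
      _ < ⊤ := ENNReal.mul_lt_top ENNReal.ofReal_lt_top hJ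
  · -- easy direction
    intro hN
    refine lt_of_le_of_lt (lintegral_mono_ae ?_) hN
    rw [ae_restrict_iff' measurableSet_Ioo]
    refine ae_of_all _ ?_
    intro r hr
    rw [Set.mem_Ioo] at hr
    have h1r : 0 < 1 - r := by linarith
    obtain ⟨t', ht', hNeq, hmax, hnn⟩ := aux_sup hp hα hMnonneg hMcont ⟨hr.1.le, hr.2⟩
    refine ENNReal.ofReal_le_ofReal ?_
    have hMr : 0 ≤ M r := hMnonneg r ⟨hr.1.le, hr.2⟩
    have hfr : M r * (1-r)^(α/p) ≤ M t' * (1-t')^(α/p) :=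
      hmax r ⟨hr.1.le, le_refl r⟩
    rw [aux_alg h1r hMr hp ((n:ℝ)-2), hNeq]
    refine mul_le_mul_of_nonneg_left ?_ (Real.rpow_nonneg h1r.le _)
    exact Real.rpow_le_rpow (by positivity) hfr hp.le
end
end

section
/- Let f : 𝔹ⁿ → ℝⁿ (n ≥ 2) be a K-quasiconformal mapping with f(0) = 0 and let 0 < p ≤ n. Then there exists a constant C depending only on n, K, p such that for every 0 < r < 1, ∫_{B(0,r)} |f(x)|^{p−n} ‖Df(x)‖ⁿ dx ≤ C ( ∫_{B(0,r)} ‖Df(x)‖ⁿ dx )^{p/n}. -/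
open MeasureTheory Metric Set
open scoped ENNReal NNReal

noncomputable section

lemma aux_abs_det_le {n : ℕ} (A : Eucl n →L[ℝ] Eucl n) : |A.det| ≤ ‖A‖ ^ n := by
  have hv0 : (volume (ball (0 : Eucl n) 1)) ≠ 0 := (measure_ball_pos volume 0 one_pos).ne'
  have hvt : (volume (ball (0 : Eucl n) 1)) ≠ ⊤ := measure_ball_lt_top.ne
  have him : A '' ball (0 : Eucl n) 1 ⊆ closedBall (0 : Eucl n) ‖A‖ := by
    rintro y ⟨x, hx, rfl⟩
    rw [mem_closedBall_zero_iff]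
    calc ‖A x‖ ≤ ‖A‖ * ‖x‖ := A.le_opNorm x
    _ ≤ ‖A‖ * 1 := by
        have h := mem_ball_zero_iff.1 hx
        exact mul_le_mul_of_nonneg_left h.le (norm_nonneg A)
    _ = ‖A‖ := mul_one _
  have h1 : ENNReal.ofReal |A.det| * volume (ball (0 : Eucl n) 1)
      ≤ ENNReal.ofReal (‖A‖ ^ n) * volume (ball (0 : Eucl n) 1) := by
    rw [← Measure.addHaar_image_continuousLinearMap volume A (ball 0 1)]
    calc volume (A '' ball (0:Eucl n) 1) ≤ volume (closedBall (0 : Eucl n) ‖A‖) :=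
        measure_mono him
    _ = ENNReal.ofReal (‖A‖ ^ Module.finrank ℝ (Eucl n)) * volume (ball (0 : Eucl n) 1) :=
        Measure.addHaar_closedBall volume 0 (norm_nonneg A)
    _ = ENNReal.ofReal (‖A‖ ^ n) * volume (ball (0 : Eucl n) 1) := by
        rw [finrank_euclideanSpace_fin]
  have h2 := (ENNReal.mul_le_mul_iff_left hv0 hvt).1 h1
  exact (ENNReal.ofReal_le_ofReal_iff (by positivity)).1 h2

lemma aux_annuli {n : ℕ} (hn : 2 ≤ n) {p : ℝ} (hp : 0 < p) (hpn : p ≤ n) :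
    ∃ c₁ : ℝ≥0∞, c₁ ≠ ⊤ ∧ ∀ R : ℝ, 0 < R →
      (∫⁻ y in ball (0 : Eucl n) R, ENNReal.ofReal (‖y‖ ^ (p - n))) ≤
        ENNReal.ofReal (R ^ p) * c₁ := by
  have : Nontrivial (Eucl n) := by
    have h0 : 0 < n := by omega
    exact Module.nontrivial_of_finrank_pos (R := ℝ) (by rw [finrank_euclideanSpace_fin]; omega)
  set v : ℝ≥0∞ := volume (ball (0 : Eucl n) 1) with hv
  have hvt : v ≠ ⊤ := measure_ball_lt_top.ne
  have h2p : (0:ℝ) < (2:ℝ) ^ (-p) := Real.rpow_pos_of_pos (by norm_num) _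
  have h2p1 : ((2:ℝ) ^ (-p)) < 1 :=
    Real.rpow_lt_one_of_one_lt_of_neg (by norm_num) (by linarith)
  have hone : (1 : ℝ≥0∞) - ENNReal.ofReal ((2:ℝ) ^ (-p)) ≠ 0 := by
    rw [ne_eq, tsub_eq_zero_iff_le]
    intro h
    have := ENNReal.one_le_ofReal.mp h
    linarith
  refine ⟨ENNReal.ofReal ((2:ℝ) ^ ((n:ℝ) - p)) * v *
      (1 - ENNReal.ofReal ((2:ℝ) ^ (-p)))⁻¹, ?_, ?_⟩
  · exact ENNReal.mul_ne_top (ENNReal.mul_ne_top ENNReal.ofReal_ne_top hvt)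
      (ENNReal.inv_ne_top.2 hone)
  intro R hR
  set a : ℝ := (2:ℝ)⁻¹ with ha
  set g : Eucl n → ℝ≥0∞ := fun y => ENNReal.ofReal (‖y‖ ^ (p - n)) with hg
  set Ak : ℕ → Set (Eucl n) := fun k =>
    closedBall (0 : Eucl n) (R * a ^ k) \ closedBall (0 : Eucl n) (R * a ^ (k + 1)) with hAk
  -- covering
  have hcover : ball (0 : Eucl n) R ⊆ {(0 : Eucl n)} ∪ ⋃ k, Ak k := by
    intro y hy
    rcases eq_or_ne y 0 with rfl | hy0
    · exact Or.inl rfl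
    refine Or.inr ?_
    have hyn : 0 < ‖y‖ := norm_pos_iff.2 hy0
    have hyR : ‖y‖ < R := by simpa [mem_ball_zero_iff] using hy
    obtain ⟨k, hk1, hk2⟩ := exists_nat_pow_near (x := R / ‖y‖) (y := (2:ℝ))
      (by rw [le_div_iff₀ hyn]; linarith) (by norm_num)
    refine mem_iUnion.2 ⟨k, ?_, ?_⟩
    · rw [mem_closedBall_zero_iff]
      rw [le_div_iff₀ hyn] at hk1
      have : ‖y‖ * 2 ^ k ≤ R := by linarith
      rw [ha, inv_pow, ← div_eq_mul_inv, le_div_iff₀ (by positivity)]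
      linarith
    · rw [mem_closedBall_zero_iff, not_le]
      rw [div_lt_iff₀ hyn] at hk2
      rw [ha, inv_pow]
      rw [mul_inv_lt_iff₀ (by positivity)]
      calc R < 2 ^ (k+1) * ‖y‖ := by linarith
      _ = ‖y‖ * 2 ^ (k+1) := mul_comm _ _
  -- main estimate
  have hsingle : (∫⁻ y in ({(0:Eucl n)} : Set (Eucl n)), g y) = 0 := by
    rw [Measure.restrict_eq_zero.2 (measure_singleton 0), lintegral_zero_measure]
  have hstep : (∫⁻ y in ball (0 : Eucl n) R, g y) ≤ ∑' k, ∫⁻ y in Ak k, g y := by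
    calc (∫⁻ y in ball (0 : Eucl n) R, g y)
        ≤ ∫⁻ y in ({(0:Eucl n)} : Set (Eucl n)) ∪ ⋃ k, Ak k, g y :=
          lintegral_mono' (Measure.restrict_mono hcover le_rfl) le_rfl
      _ ≤ (∫⁻ y in ({(0:Eucl n)} : Set (Eucl n)), g y) + ∫⁻ y in ⋃ k, Ak k, g y :=
          lintegral_mono' (Measure.restrict_union_le _ _) le_rfl |>.trans
            (le_of_eq (lintegral_add_measure _ _ _))
      _ = ∫⁻ y in ⋃ k, Ak k, g y := by rw [hsingle, zero_add]
      _ ≤ ∑' k, ∫⁻ y in Ak k, g y := lintegral_iUnion_le _ _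
  -- per-annulus bound
  have ha0 : (0:ℝ) < a := by norm_num [ha]
  have hak : ∀ k : ℕ, (∫⁻ y in Ak k, g y) ≤
      ENNReal.ofReal (R ^ p * (2:ℝ) ^ ((n:ℝ) - p) * ((2:ℝ) ^ (-p)) ^ k) * v := by
    intro k
    have hb : (0:ℝ) < R * a ^ k := by positivity
    have hb1 : (0:ℝ) < R * a ^ (k+1) := by positivity
    have hmeas : MeasurableSet (Ak k) :=
      measurableSet_closedBall.diff measurableSet_closedBall
    have hptw : ∀ y ∈ Ak k, g y ≤ ENNReal.ofReal ((R * a ^ (k+1)) ^ (p - (n:ℝ))) := by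
      intro y hy
      apply ENNReal.ofReal_le_ofReal
      have h1 : R * a ^ (k+1) ≤ ‖y‖ := by
        have := hy.2
        rw [mem_closedBall_zero_iff, not_le] at this
        exact this.le
      exact Real.rpow_le_rpow_of_nonpos hb1 h1 (by linarith)
    have hmuAk : volume (Ak k) ≤ ENNReal.ofReal ((R * a ^ k) ^ n) * v := by
      calc volume (Ak k) ≤ volume (closedBall (0 : Eucl n) (R * a ^ k)) :=
          measure_mono diff_subset
      _ = ENNReal.ofReal ((R * a ^ k) ^ Module.finrank ℝ (Eucl n)) * v :=
          Measure.addHaar_closedBall volume 0 hb.le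
      _ = ENNReal.ofReal ((R * a ^ k) ^ n) * v := by rw [finrank_euclideanSpace_fin]
    have key : (R * a ^ (k+1)) ^ (p - (n:ℝ)) * (R * a ^ k) ^ (n:ℕ)
        = R ^ p * (2:ℝ) ^ ((n:ℝ) - p) * ((2:ℝ) ^ (-p)) ^ k := by
      have h1 : R * a ^ (k+1) = (R * a ^ k) * a := by ring
      rw [h1, Real.mul_rpow hb.le ha0.le, ← Real.rpow_natCast (R * a ^ k) n,
        mul_right_comm, ← Real.rpow_add hb, sub_add_cancel,
        Real.mul_rpow hR.le (by positivity : (0:ℝ) ≤ a ^ k)]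
      have hap : (a ^ k : ℝ) ^ p = ((2:ℝ) ^ (-p)) ^ k := by
        rw [ha, ← Real.rpow_natCast (2⁻¹:ℝ) k, ← Real.rpow_mul (by norm_num),
          ← Real.rpow_natCast ((2:ℝ) ^ (-p)) k, ← Real.rpow_mul (by norm_num),
          Real.inv_rpow (by norm_num), ← Real.rpow_neg (by norm_num)]
        ring_nf
      have hapn : (a : ℝ) ^ (p - (n:ℝ)) = (2:ℝ) ^ ((n:ℝ) - p) := by
        rw [ha, Real.inv_rpow (by norm_num), ← Real.rpow_neg (by norm_num), neg_sub]
      rw [hap, hapn]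
      ring
    calc (∫⁻ y in Ak k, g y)
        ≤ ∫⁻ _ in Ak k, ENNReal.ofReal ((R * a ^ (k+1)) ^ (p - (n:ℝ))) :=
          setLIntegral_mono' hmeas hptw
      _ = ENNReal.ofReal ((R * a ^ (k+1)) ^ (p - (n:ℝ))) * volume (Ak k) :=
          setLIntegral_const _ _
      _ ≤ ENNReal.ofReal ((R * a ^ (k+1)) ^ (p - (n:ℝ))) *
          (ENNReal.ofReal ((R * a ^ k) ^ n) * v) := by gcongr
      _ = ENNReal.ofReal ((R * a ^ (k+1)) ^ (p - (n:ℝ)) * (R * a ^ k) ^ n) * v := by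
          rw [← mul_assoc, ← ENNReal.ofReal_mul (by positivity)]
      _ = ENNReal.ofReal (R ^ p * (2:ℝ) ^ ((n:ℝ) - p) * ((2:ℝ) ^ (-p)) ^ k) * v := by
          rw [key]
  -- sum up
  have hsum : (∑' k, ∫⁻ y in Ak k, g y) ≤
      ENNReal.ofReal (R ^ p) *
        (ENNReal.ofReal ((2:ℝ) ^ ((n:ℝ) - p)) * v *
          (1 - ENNReal.ofReal ((2:ℝ) ^ (-p)))⁻¹) := by
    calc (∑' k, ∫⁻ y in Ak k, g y)
        ≤ ∑' k, ENNReal.ofReal (R ^ p * (2:ℝ) ^ ((n:ℝ) - p) * ((2:ℝ) ^ (-p)) ^ k) * v :=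
          ENNReal.tsum_le_tsum hak
      _ = ∑' k, (ENNReal.ofReal (R ^ p) * ENNReal.ofReal ((2:ℝ) ^ ((n:ℝ) - p)) * v) *
            (ENNReal.ofReal ((2:ℝ) ^ (-p))) ^ k := by
          congr 1
          funext k
          rw [ENNReal.ofReal_mul (by positivity), ENNReal.ofReal_mul (by positivity),
            ENNReal.ofReal_pow h2p.le]
          ring
      _ = (ENNReal.ofReal (R ^ p) * ENNReal.ofReal ((2:ℝ) ^ ((n:ℝ) - p)) * v) *
            (1 - ENNReal.ofReal ((2:ℝ) ^ (-p)))⁻¹ := by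
          rw [ENNReal.tsum_mul_left, ENNReal.tsum_geometric]
      _ = ENNReal.ofReal (R ^ p) *
          (ENNReal.ofReal ((2:ℝ) ^ ((n:ℝ) - p)) * v *
            (1 - ENNReal.ofReal ((2:ℝ) ^ (-p)))⁻¹) := by ring
  exact hstep.trans hsum

lemma aux_bathtub {n : ℕ} (hn : 2 ≤ n) {p : ℝ} (hp : 0 < p) (hpn : p ≤ n) :
    ∃ C₀ : ℝ≥0∞, C₀ ≠ 0 ∧ C₀ ≠ ⊤ ∧ ∀ A : Set (Eucl n),
      (∫⁻ y in A, ENNReal.ofReal (‖y‖ ^ (p - n))) ≤ C₀ * (volume A) ^ (p / (n:ℝ)) := by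
  obtain ⟨c₁, hc₁t, hann⟩ := aux_annuli hn hp hpn
  have hn0 : (0:ℝ) < n := by
    have : 0 < n := by omega
    exact_mod_cast this
  set v : ℝ≥0∞ := volume (ball (0 : Eucl n) 1) with hv
  have hvt : v ≠ ⊤ := measure_ball_lt_top.ne
  have hv0 : v ≠ 0 := (measure_ball_pos volume 0 one_pos).ne'
  set ω : ℝ := v.toReal with hω
  have hω0 : 0 < ω := ENNReal.toReal_pos hv0 hvt
  have hωp : (0:ℝ) < ω ^ (p / (n:ℝ)) := Real.rpow_pos_of_pos hω0 _
  have hC0 : (c₁ + v) * (ENNReal.ofReal (ω ^ (p / (n:ℝ))))⁻¹ ≠ 0 := by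
    refine mul_ne_zero ?_ ?_
    · intro h
      rw [add_eq_zero] at h
      exact hv0 h.2
    · exact ENNReal.inv_ne_zero.2 ENNReal.ofReal_ne_top
  refine ⟨(c₁ + v) * (ENNReal.ofReal (ω ^ (p / (n:ℝ))))⁻¹, hC0, ?_, ?_⟩
  · exact ENNReal.mul_ne_top (ENNReal.add_ne_top.2 ⟨hc₁t, hvt⟩)
      (ENNReal.inv_ne_top.2 (by simpa using hωp))
  intro A
  set V : ℝ≥0∞ := volume A with hV
  rcases eq_or_ne V 0 with hV0 | hV0
  · rw [Measure.restrict_eq_zero.2 hV0, lintegral_zero_measure]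
    exact zero_le
  rcases eq_or_ne V ⊤ with hVt | hVt
  · rw [hVt, ENNReal.top_rpow_of_pos (by positivity), ENNReal.mul_top hC0]
    exact le_top
  -- main case
  have hVr0 : 0 < V.toReal := ENNReal.toReal_pos hV0 hVt
  set R : ℝ := (V.toReal / ω) ^ ((n:ℝ)⁻¹) with hR
  have hR0 : 0 < R := Real.rpow_pos_of_pos (by positivity) _
  have hRn : R ^ ((n:ℝ)) = V.toReal / ω := by
    rw [hR, ← Real.rpow_mul (by positivity), inv_mul_cancel₀ (by positivity), Real.rpow_one]
  have hVeq : V.toReal = ω * R ^ ((n:ℝ)) := by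
    rw [hRn]; field_simp
  set g : Eucl n → ℝ≥0∞ := fun y => ENNReal.ofReal (‖y‖ ^ (p - n)) with hg
  have hsplit : (∫⁻ y in A, g y) ≤
      (∫⁻ y in ball (0 : Eucl n) R, g y) + ∫⁻ y in A \ ball (0 : Eucl n) R, g y := by
    calc (∫⁻ y in A, g y)
        ≤ ∫⁻ y in ball (0 : Eucl n) R ∪ (A \ ball (0 : Eucl n) R), g y :=
          lintegral_mono' (Measure.restrict_mono (fun y hy => by
            by_cases h : y ∈ ball (0 : Eucl n) R
            · exact Or.inl h
            · exact Or.inr ⟨hy, h⟩) le_rfl) le_rfl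
      _ ≤ _ := lintegral_mono' (Measure.restrict_union_le _ _) le_rfl |>.trans
            (le_of_eq (lintegral_add_measure _ _ _))
  have houter : (∫⁻ y in A \ ball (0 : Eucl n) R, g y) ≤ ENNReal.ofReal (R ^ (p - n)) * V := by
    have hsub : A \ ball (0 : Eucl n) R ⊆ (ball (0 : Eucl n) R)ᶜ := fun y hy => hy.2
    have hle : ∀ᵐ y ∂(volume.restrict (A \ ball (0 : Eucl n) R)),
        g y ≤ ENNReal.ofReal (R ^ (p - n)) := by
      refine ae_restrict_of_ae_restrict_of_subset hsub ?_
      refine (ae_restrict_mem measurableSet_ball.compl).mono (fun y hy => ?_)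
      have hyR : R ≤ ‖y‖ := by
        rw [mem_compl_iff, mem_ball_zero_iff, not_lt] at hy
        exact hy
      exact ENNReal.ofReal_le_ofReal (Real.rpow_le_rpow_of_nonpos hR0 hyR (by linarith))
    calc (∫⁻ y in A \ ball (0 : Eucl n) R, g y)
        ≤ ∫⁻ _ in A \ ball (0 : Eucl n) R, ENNReal.ofReal (R ^ (p - n)) :=
          lintegral_mono_ae hle
      _ = ENNReal.ofReal (R ^ (p - n)) * volume (A \ ball (0 : Eucl n) R) :=
          setLIntegral_const _ _
      _ ≤ ENNReal.ofReal (R ^ (p - n)) * V := by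
          gcongr
          exact measure_mono diff_subset
  have houter2 : ENNReal.ofReal (R ^ (p - n)) * V = ENNReal.ofReal (ω * R ^ p) := by
    have : V = ENNReal.ofReal (V.toReal) := (ENNReal.ofReal_toReal hVt).symm
    rw [this, hVeq, ← ENNReal.ofReal_mul (by positivity)]
    congr 1
    rw [show R ^ (p - (n:ℝ)) * (ω * R ^ ((n:ℝ))) = ω * (R ^ (p - (n:ℝ)) * R ^ ((n:ℝ))) from by
      ring, ← Real.rpow_add hR0, sub_add_cancel]
  have hinner := hann R hR0
  -- RHS identity
  have hRHS : ((c₁ + v) * (ENNReal.ofReal (ω ^ (p / (n:ℝ))))⁻¹) * V ^ (p / (n:ℝ))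
      = (c₁ + v) * ENNReal.ofReal (R ^ p) := by
    have h1 : V ^ (p / (n:ℝ)) = ENNReal.ofReal (ω ^ (p / (n:ℝ))) * ENNReal.ofReal (R ^ p) := by
      have : V = ENNReal.ofReal (V.toReal) := (ENNReal.ofReal_toReal hVt).symm
      rw [this, ENNReal.ofReal_rpow_of_pos hVr0, hVeq,
        Real.mul_rpow hω0.le (by positivity), ← Real.rpow_mul hR0.le,
        mul_div_cancel₀ p (by positivity : (n:ℝ) ≠ 0),
        ENNReal.ofReal_mul (by positivity)]
    rw [h1, mul_assoc, ← mul_assoc (ENNReal.ofReal (ω ^ (p / (n:ℝ))))⁻¹,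
      ENNReal.inv_mul_cancel (by simpa using hωp) ENNReal.ofReal_ne_top, one_mul]
  rw [hRHS]
  calc (∫⁻ y in A, g y)
      ≤ (∫⁻ y in ball (0 : Eucl n) R, g y) + ∫⁻ y in A \ ball (0 : Eucl n) R, g y := hsplit
    _ ≤ ENNReal.ofReal (R ^ p) * c₁ + ENNReal.ofReal (ω * R ^ p) :=
        add_le_add hinner (houter.trans_eq houter2)
    _ = (c₁ + v) * ENNReal.ofReal (R ^ p) := by
        rw [ENNReal.ofReal_mul hω0.le, hω, ENNReal.ofReal_toReal hvt]
        ring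

theorem stmt13 {n : ℕ} (hn : 2 ≤ n) (K p : ℝ) (hK : 1 ≤ K) (hp : 0 < p)
    (hpn : p ≤ (n : ℝ)) :
    ∃ C : ℝ, 0 < C ∧
      ∀ (f : Eucl n → Eucl n) (Df : Eucl n → Eucl n →L[ℝ] Eucl n),
        IsQuasiconformal K f Df → f 0 = 0 →
        ∀ r : ℝ, 0 < r → r < 1 →
          (∫⁻ x in Metric.ball (0 : Eucl n) r,
              ENNReal.ofReal (‖f x‖ ^ (p - n) * ‖Df x‖ ^ n)) ≤
            ENNReal.ofReal C *
              (∫⁻ x in Metric.ball (0 : Eucl n) r,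
                ENNReal.ofReal (‖Df x‖ ^ n)) ^ (p / (n : ℝ)) := by
  obtain ⟨C₀, hC₀0, hC₀t, hbath⟩ := aux_bathtub hn hp hpn
  have hKpos : (0:ℝ) < K := lt_of_lt_of_le one_pos hK
  set D : ℝ≥0∞ := ENNReal.ofReal K * C₀ with hD
  have hDt : D ≠ ⊤ := ENNReal.mul_ne_top ENNReal.ofReal_ne_top hC₀t
  have hD0 : D ≠ 0 := mul_ne_zero (by simp [ENNReal.ofReal_eq_zero, not_le, hKpos]) hC₀0
  refine ⟨D.toReal, ENNReal.toReal_pos hD0 hDt, ?_⟩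
  intro f Df hqc hf0 r hr0 hr1
  rw [ENNReal.ofReal_toReal hDt]
  set P : Eucl n → Prop := fun x => HasFDerivAt f (Df x) x ∧ ‖Df x‖ ^ n ≤ K * (Df x).det
    with hP
  have hae : ∀ᵐ x ∂(volume.restrict (ball (0:Eucl n) 1)), P x :=
    hqc.hasFDerivAt.and hqc.distortion
  set N := toMeasurable (volume.restrict (ball (0:Eucl n) 1)) {x | ¬ P x} with hN
  have hNmeas : MeasurableSet N := measurableSet_toMeasurable _ _
  have hNsub : {x | ¬ P x} ⊆ N := subset_toMeasurable _ _
  have hN0 : volume (N ∩ ball (0:Eucl n) 1) = 0 := by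
    rw [← Measure.restrict_apply hNmeas, hN, measure_toMeasurable]
    exact ae_iff.1 hae
  set s : Set (Eucl n) := ball (0:Eucl n) r \ N with hs
  have hsmeas : MeasurableSet s := measurableSet_ball.diff hNmeas
  have hball : ball (0:Eucl n) r ⊆ ball (0:Eucl n) 1 := ball_subset_ball hr1.le
  have hsae : s =ᵐ[volume] ball (0:Eucl n) r := by
    rw [ae_eq_set]
    constructor
    · refine measure_mono_null (fun y hy => ?_) (measure_empty)
      exact hy.2 hy.1.1
    · refine measure_mono_null (fun y hy => ?_) hN0
      rcases hy with ⟨hy1, hy2⟩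
      have : y ∈ N := by
        by_contra h
        exact hy2 ⟨hy1, h⟩
      exact ⟨this, hball hy1⟩
  have hrestrict : volume.restrict s = volume.restrict (ball (0:Eucl n) r) :=
    Measure.restrict_congr_set hsae
  have hPs : ∀ x ∈ s, P x := by
    intro x hx
    by_contra h
    exact hx.2 (hNsub h)
  have hInj : InjOn f s := by
    intro x hx y hy hxy
    have hx1 : x ∈ ball (0:Eucl n) 1 := hball hx.1
    have hy1 : y ∈ ball (0:Eucl n) 1 := hball hy.1
    have := hqc.embedding.injective
      (a₁ := (⟨x, hx1⟩ : ball (0:Eucl n) 1)) (a₂ := ⟨y, hy1⟩) hxy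
    simpa using this
  have hFd : ∀ x ∈ s, HasFDerivWithinAt f (Df x) s x :=
    fun x hx => ((hPs x hx).1).hasFDerivWithinAt
  set g : Eucl n → ℝ≥0∞ := fun y => ENNReal.ofReal (‖y‖ ^ (p - (n:ℝ))) with hg
  set T : ℝ≥0∞ := ∫⁻ x in ball (0:Eucl n) r, ENNReal.ofReal (‖Df x‖ ^ n) with hT
  have hvol : volume (f '' s) ≤ T := by
    rw [← lintegral_abs_det_fderiv_eq_addHaar_image volume hsmeas hFd hInj]
    calc (∫⁻ x in s, ENNReal.ofReal |(Df x).det|)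
        ≤ ∫⁻ x in s, ENNReal.ofReal (‖Df x‖ ^ n) :=
          setLIntegral_mono' hsmeas (fun x _ =>
            ENNReal.ofReal_le_ofReal (aux_abs_det_le (Df x)))
      _ = T := by rw [hT, ← hrestrict]
  have hptw : ∀ x ∈ s, ENNReal.ofReal (‖f x‖ ^ (p - (n:ℝ)) * ‖Df x‖ ^ n) ≤
      ENNReal.ofReal K * (ENNReal.ofReal |(Df x).det| * g (f x)) := by
    intro x hx
    have h1 : ‖Df x‖ ^ n ≤ K * (Df x).det := (hPs x hx).2
    have hdet0 : 0 ≤ (Df x).det := by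
      nlinarith [pow_nonneg (norm_nonneg (Df x)) n]
    have hfnn : (0:ℝ) ≤ ‖f x‖ ^ (p - (n:ℝ)) := Real.rpow_nonneg (norm_nonneg _) _
    have habs : |(Df x).det| = (Df x).det := abs_of_nonneg hdet0
    have hreal : ‖f x‖ ^ (p - (n:ℝ)) * ‖Df x‖ ^ n ≤
        K * (|(Df x).det| * ‖f x‖ ^ (p - (n:ℝ))) := by
      rw [habs]
      nlinarith [mul_le_mul_of_nonneg_left h1 hfnn]
    calc ENNReal.ofReal (‖f x‖ ^ (p - (n:ℝ)) * ‖Df x‖ ^ n)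
        ≤ ENNReal.ofReal (K * (|(Df x).det| * ‖f x‖ ^ (p - (n:ℝ)))) :=
          ENNReal.ofReal_le_ofReal hreal
      _ = ENNReal.ofReal K * (ENNReal.ofReal |(Df x).det| * g (f x)) := by
          rw [ENNReal.ofReal_mul hKpos.le, ENNReal.ofReal_mul (abs_nonneg _)]
  calc (∫⁻ x in ball (0:Eucl n) r, ENNReal.ofReal (‖f x‖ ^ (p - (n:ℝ)) * ‖Df x‖ ^ n))
      = ∫⁻ x in s, ENNReal.ofReal (‖f x‖ ^ (p - (n:ℝ)) * ‖Df x‖ ^ n) := by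
        rw [← hrestrict]
    _ ≤ ∫⁻ x in s, ENNReal.ofReal K * (ENNReal.ofReal |(Df x).det| * g (f x)) :=
        setLIntegral_mono' hsmeas hptw
    _ = ENNReal.ofReal K * ∫⁻ x in s, ENNReal.ofReal |(Df x).det| * g (f x) :=
        lintegral_const_mul' _ _ ENNReal.ofReal_ne_top
    _ = ENNReal.ofReal K * ∫⁻ y in f '' s, g y := by
        rw [lintegral_image_eq_lintegral_abs_det_fderiv_mul volume hsmeas hFd hInj g]
    _ ≤ ENNReal.ofReal K * (C₀ * (volume (f '' s)) ^ (p / (n:ℝ))) := by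
        gcongr
        exact hbath _
    _ ≤ ENNReal.ofReal K * (C₀ * T ^ (p / (n:ℝ))) :=
        mul_le_mul_right (mul_le_mul_right
          (ENNReal.rpow_le_rpow hvol (by positivity)) C₀) _
    _ = D * T ^ (p / (n:ℝ)) := by rw [hD]; ring
end
end
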